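/- Let x = x_1,…,x_k be an M-regular sequence on an R-module M and let y ∈ R be such that M/xM is of bounded y-torsion. Then M/x^n M is of bounded y-torsion for all n ≥ 1. -/

import Mathlib

open Finset

/-- `x : Fin k → R` is an `M`-regular sequence: each `x i` is a non-zerodivisor on
`M/(x_1,…,x_{i-1})M`. -/
def IsRegularSeq {R : Type*} [CommRing R] (M : Type*) [AddCommGroup M] [Module R M]
    {k : ℕ} (x : Fin k → R) : Prop :=
  ∀ i : Fin k, ∀ z : M,
    x i • z ∈ (Ideal.span (x '' {j | j < i})) • (⊤ : Submodule R M) →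
      z ∈ (Ideal.span (x '' {j | j < i})) • (⊤ : Submodule R M)

namespace QPBTaux
variable {R : Type*} [CommRing R] {M : Type*} [AddCommGroup M] [Module R M]

def Px {k : ℕ} (x : Fin k → R) (t : Multiset (Fin k)) : R := (t.map x).prod

lemma Px_mem {k : ℕ} (x : Fin k → R) (t : Multiset (Fin k)) :
    Px x t ∈ (Ideal.span (Set.range x)) ^ (Multiset.card t) := by
  induction t using Multiset.induction with
  | empty => simp [Px]
  | cons a t ih =>
      rw [show Px x (a ::ₘ t) = x a * Px x t by simp [Px], Multiset.card_cons, pow_succ']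
      exact Ideal.mul_mem_mul (Ideal.subset_span ⟨a, rfl⟩) ih

def HasRep {k : ℕ} (x : Fin k → R) (N : Submodule R M) (n : ℕ) (z : M) : Prop :=
  ∃ m : Sym (Fin k) n → M, (∀ s, m s ∈ N) ∧ z = ∑ s : Sym (Fin k) n, Px x ↑s • m s

lemma HasRep.add {k : ℕ} {x : Fin k → R} {N : Submodule R M} {n : ℕ} {z w : M}
    (hz : HasRep x N n z) (hw : HasRep x N n w) : HasRep x N n (z + w) := by
  obtain ⟨m1, hm1, rfl⟩ := hz
  obtain ⟨m2, hm2, rfl⟩ := hw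
  exact ⟨m1 + m2, fun s => N.add_mem (hm1 s) (hm2 s), by
    simp [smul_add, Finset.sum_add_distrib]⟩

lemma HasRep.zero {k : ℕ} (x : Fin k → R) (N : Submodule R M) (n : ℕ) :
    HasRep x N n 0 := ⟨0, fun _ => N.zero_mem, by simp⟩

lemma HasRep.smul {k : ℕ} {x : Fin k → R} {N : Submodule R M} {n : ℕ} {z : M}
    (c : R) (hz : HasRep x N n z) : HasRep x N n (c • z) := by
  obtain ⟨m, hm, rfl⟩ := hz
  refine ⟨fun s => c • m s, fun s => N.smul_mem c (hm s), ?_⟩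
  rw [Finset.smul_sum]
  exact Finset.sum_congr rfl fun s _ => smul_comm _ _ _

lemma HasRep.cons {k : ℕ} {x : Fin k → R} {N : Submodule R M} {n : ℕ} {z : M}
    (i : Fin k) (hz : HasRep x N n z) : HasRep x N (n + 1) (x i • z) := by
  classical
  obtain ⟨m, hm, rfl⟩ := hz
  refine ⟨fun t => ∑ s ∈ univ.filter (fun s : Sym (Fin k) n => i ::ₛ s = t), m s,
    fun t => Submodule.sum_mem _ fun s _ => hm s, Eq.symm ?_⟩
  calc (∑ t : Sym (Fin k) (n+1),
        Px x ↑t • ∑ s ∈ univ.filter (fun s : Sym (Fin k) n => i ::ₛ s = t), m s)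
      = ∑ t : Sym (Fin k) (n+1),
          ∑ s ∈ univ.filter (fun s : Sym (Fin k) n => i ::ₛ s = t), Px x ↑(i ::ₛ s) • m s := by
        refine Finset.sum_congr rfl fun t _ => ?_
        rw [Finset.smul_sum]
        exact Finset.sum_congr rfl fun s hs => by rw [(Finset.mem_filter.1 hs).2]
    _ = ∑ s : Sym (Fin k) n, Px x ↑(i ::ₛ s) • m s :=
        Finset.sum_fiberwise_of_maps_to (fun s _ => Finset.mem_univ _) _
    _ = ∑ s : Sym (Fin k) n, x i • (Px x ↑s • m s) := by
        refine Finset.sum_congr rfl fun s _ => ?_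
        rw [Sym.coe_cons]
        show Px x (i ::ₘ ↑s) • m s = _
        rw [show Px x (i ::ₘ ↑s) = x i * Px x ↑s by simp [Px], mul_smul]
    _ = x i • ∑ s : Sym (Fin k) n, Px x ↑s • m s := (Finset.smul_sum).symm

lemma hasRep_of_mem {k : ℕ} (x : Fin k → R) (N : Submodule R M) :
    ∀ (n : ℕ) (z : M), z ∈ (Ideal.span (Set.range x)) ^ n • N → HasRep x N n z := by
  intro n
  induction n with
  | zero =>
      intro z hz
      rw [pow_zero, Ideal.one_eq_top, Submodule.top_smul] at hz
      refine ⟨fun _ => z, fun _ => hz, ?_⟩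
      rw [Fintype.sum_unique]
      show z = Px x ↑(default : Sym (Fin k) 0) • z
      rw [Sym.eq_nil_of_card_zero (default : Sym (Fin k) 0)]
      show z = Px x 0 • z
      rw [show Px x 0 = 1 from rfl, one_smul]
  | succ n ih =>
      intro z hz
      rw [pow_succ', ← smul_eq_mul, Submodule.smul_assoc] at hz
      refine Submodule.smul_induction_on hz ?_ (fun a b ha hb => ha.add hb)
      intro r hr w hw
      obtain ⟨c, rfl⟩ := (Submodule.mem_span_range_iff_exists_fun R).1 hr
      rw [Finset.sum_smul]
      refine Finset.sum_induction _ _ (fun a b ha hb => ha.add hb) (HasRep.zero x N _)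
        (fun i' _ => ?_)
      rw [smul_assoc]
      exact ((ih w hw).cons i').smul (c i')

/-- converse: a homogeneous degree-`n` expression with coefficients in `N` lies in `Jⁿ • N` -/
lemma sum_rep_mem {k : ℕ} (x : Fin k → R) (N : Submodule R M) (n : ℕ)
    (m : Sym (Fin k) n → M) (hm : ∀ s, m s ∈ N) :
    (∑ s : Sym (Fin k) n, Px x ↑s • m s) ∈ (Ideal.span (Set.range x)) ^ n • N := by
  refine Submodule.sum_mem _ fun s _ => ?_
  have := Submodule.smul_mem_smul (Px_mem x ↑s) (hm s)
  rwa [Sym.card_coe] at this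

lemma Qmem_of {k : ℕ} (x : Fin k → R) (n : ℕ)
    (hQ : ∀ m : Sym (Fin k) n → M, (∑ s : Sym (Fin k) n, Px x ↑s • m s) = 0 →
      ∀ s, m s ∈ Ideal.span (Set.range x) • (⊤ : Submodule R M))
    (m : Sym (Fin k) n → M)
    (hm : (∑ s : Sym (Fin k) n, Px x ↑s • m s) ∈
      (Ideal.span (Set.range x)) ^ (n + 1) • (⊤ : Submodule R M)) :
    ∀ s, m s ∈ Ideal.span (Set.range x) • (⊤ : Submodule R M) := by
  rw [pow_succ, ← smul_eq_mul, Submodule.smul_assoc] at hm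
  obtain ⟨u, hu, hequ⟩ := hasRep_of_mem x (Ideal.span (Set.range x) • ⊤) n _ hm
  have h0 : (∑ s : Sym (Fin k) n, Px x ↑s • (m s - u s)) = 0 := by
    simp only [smul_sub, Finset.sum_sub_distrib, ← hequ, sub_self]
  intro s
  have := hQ _ h0 s
  simpa using Submodule.add_mem _ this (hu s)

lemma image_lt_castSucc {k : ℕ} (x : Fin (k+1) → R) (i : Fin k) :
    (x ∘ Fin.castSucc) '' {j : Fin k | j < i} = x '' {j : Fin (k+1) | j < Fin.castSucc i} := by
  ext b
  constructor
  · rintro ⟨j, hj, rfl⟩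
    exact ⟨Fin.castSucc j, Fin.castSucc_lt_castSucc_iff.2 hj, rfl⟩
  · rintro ⟨j, hj, rfl⟩
    have hne : j ≠ Fin.last k := Fin.ne_of_lt (hj.trans_le (Fin.le_last _))
    refine ⟨j.castPred hne, ?_, by simp [Fin.castSucc_castPred]⟩
    have : Fin.castSucc (j.castPred hne) < Fin.castSucc i := by
      rwa [Fin.castSucc_castPred]
    exact Fin.castSucc_lt_castSucc_iff.1 this

lemma image_lt_last {k : ℕ} (x : Fin (k+1) → R) :
    x '' {j : Fin (k+1) | j < Fin.last k} = Set.range (x ∘ Fin.castSucc) := by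
  ext b
  constructor
  · rintro ⟨j, hj, rfl⟩
    have hne : j ≠ Fin.last k := Fin.ne_of_lt hj
    exact ⟨j.castPred hne, by simp [Fin.castSucc_castPred]⟩
  · rintro ⟨i, rfl⟩
    exact ⟨Fin.castSucc i, Fin.castSucc_lt_last i, rfl⟩

lemma exists_map_castSucc {k n : ℕ} (s : Sym (Fin (k+1)) n) (hd : Fin.last k ∉ s) :
    ∃ t : Sym (Fin k) n, s = Sym.map Fin.castSucc t := by
  have hne : ∀ a ∈ (s : Multiset (Fin (k+1))), a ≠ Fin.last k := by
    intro a ha hEq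
    exact hd (hEq ▸ (Sym.mem_coe.1 ha))
  refine ⟨Sym.mk ((s : Multiset (Fin (k+1))).attach.map
      (fun p => p.1.castPred (hne p.1 p.2))) ?_, ?_⟩
  · rw [Multiset.card_map, Multiset.card_attach, Sym.card_coe]
  · apply Sym.coe_injective
    rw [Sym.coe_map, Sym.coe_mk, Multiset.map_map]
    conv_lhs => rw [← Multiset.attach_map_val (s : Multiset (Fin (k+1)))]
    exact Multiset.map_congr rfl fun p _ => by
      simp [Fin.castSucc_castPred]

/-- Quasi-regularity: a homogeneous relation among a regular sequence has all
coefficients in the ideal. -/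
lemma Q0 : ∀ (k : ℕ) (x : Fin k → R), IsRegularSeq M x → ∀ (n : ℕ)
    (m : Sym (Fin k) n → M), (∑ s : Sym (Fin k) n, Px x ↑s • m s) = 0 →
    ∀ s, m s ∈ Ideal.span (Set.range x) • (⊤ : Submodule R M) := by
  intro k
  induction k with
  | zero =>
      intro x _ n
      match n with
      | 0 =>
          intro m hsum s
          rw [Fintype.sum_unique] at hsum
          have hs : s = default := Subsingleton.elim _ _
          have h1 : Px x ↑(default : Sym (Fin 0) 0) = 1 := rfl
          rw [h1, one_smul] at hsum
          rw [hs, hsum]; exact Submodule.zero_mem _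
      | (n+1) =>
          intro m _ s
          exact absurd (Sym.exists_mem s) (by rintro ⟨a, _⟩; exact a.elim0)
  | succ k ih =>
      intro x hreg
      set d := Fin.last k with hdd
      set x' : Fin k → R := x ∘ Fin.castSucc with hx'
      set J := Ideal.span (Set.range x) with hJ
      set J' := Ideal.span (Set.range x') with hJ'
      have hJ'J : J' ≤ J := Ideal.span_mono (by rintro _ ⟨i, rfl⟩; exact ⟨Fin.castSucc i, rfl⟩)
      have hreg' : IsRegularSeq M x' := by
        intro i z hz
        rw [image_lt_castSucc x i] at hz ⊢
        exact hreg (Fin.castSucc i) z hz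
      have hQ' := ih x' hreg'
      have hlast : ∀ z : M, x d • z ∈ J' • (⊤ : Submodule R M) → z ∈ J' • (⊤ : Submodule R M) := by
        intro z hz
        have h1 := hreg d z (by rw [image_lt_last x]; exact hz)
        rwa [image_lt_last x] at h1
      -- x d is a non-zerodivisor on M / J'^j M
      have hL : ∀ (j : ℕ) (z : M), x d • z ∈ J' ^ j • (⊤ : Submodule R M) →
          z ∈ J' ^ j • (⊤ : Submodule R M) := by
        intro j
        induction j with
        | zero => intro z _; simp
        | succ j ihj =>
            intro z hz
            have hz' : z ∈ J' ^ j • (⊤ : Submodule R M) :=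
              ihj z (Submodule.smul_mono_left (Ideal.pow_le_pow_right j.le_succ) hz)
            obtain ⟨w, hw, rfl⟩ := hasRep_of_mem x' ⊤ j _ hz'
            have hsum : (∑ s : Sym (Fin k) j, Px x' ↑s • (x d • w s)) ∈
                J' ^ (j + 1) • (⊤ : Submodule R M) := by
              have : (∑ s : Sym (Fin k) j, Px x' ↑s • (x d • w s))
                  = x d • ∑ s : Sym (Fin k) j, Px x' ↑s • w s := by
                rw [Finset.smul_sum]
                exact Finset.sum_congr rfl fun s _ => smul_comm _ _ _
              rwa [this]
            have hws : ∀ s, x d • w s ∈ J' • (⊤ : Submodule R M) :=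
              Qmem_of x' j (hQ' j) _ hsum
            have hmem : ∀ s, w s ∈ J' • (⊤ : Submodule R M) := fun s => hlast _ (hws s)
            have h2 := sum_rep_mem x' (J' • ⊤) j w hmem
            rwa [← Submodule.smul_assoc, smul_eq_mul, ← pow_succ] at h2
      intro n
      induction n with
      | zero =>
          intro m hsum s
          rw [Fintype.sum_unique] at hsum
          have hs : s = default := Subsingleton.elim _ _
          have h1 : ∀ t : Sym (Fin (k+1)) 0, Px x ↑t = 1 := fun t => by
            rw [Sym.eq_nil_of_card_zero t]; rfl
          rw [h1, one_smul] at hsum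
          rw [Subsingleton.elim s _, hsum]
          exact Submodule.zero_mem _
      | succ n ihn =>
          intro m hsum s0
          classical
          set G := ∑ s' : Sym (Fin (k+1)) n, Px x ↑s' • m (d ::ₛ s') with hG
          set H := ∑ t : Sym (Fin k) (n+1), Px x' ↑t • m (Sym.map Fin.castSucc t) with hH
          have hA : ∑ s ∈ univ.filter (fun s : Sym (Fin (k+1)) (n+1) => d ∈ s),
              Px x ↑s • m s = x d • G := by
            rw [hG, Finset.smul_sum]
            have key : ∀ (a : Sym (Fin (k+1)) (n+1)) (hda : d ∈ a),
                Px x ↑a • m a = x d • (Px x ↑(a.erase d hda) • m (d ::ₛ a.erase d hda)) := by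
              intro a hda
              obtain ⟨b, rfl⟩ := Sym.exists_cons_of_mem hda
              rw [Sym.erase_cons_head, Sym.coe_cons,
                show Px x (d ::ₘ ↑b) = x d * Px x ↑b by simp [Px], mul_smul]
            exact Finset.sum_bij' (i := fun a ha => a.erase d (by simpa using ha))
              (j := fun b _ => d ::ₛ b) (fun a ha => Finset.mem_univ _)
              (fun b _ => Finset.mem_filter.2 ⟨Finset.mem_univ _, Sym.mem_cons_self _ _⟩)
              (fun a ha => Sym.cons_erase _)
              (fun b _ => Sym.erase_cons_head _ _ _)
              (fun a ha => key a (by simpa using ha))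
          have hB : ∑ s ∈ univ.filter (fun s : Sym (Fin (k+1)) (n+1) => d ∉ s),
              Px x ↑s • m s = H := by
            rw [hH]
            refine (Finset.sum_nbij (i := fun t => Sym.map Fin.castSucc t) ?_ ?_ ?_ ?_).symm
            · intro t _
              refine Finset.mem_filter.2 ⟨Finset.mem_univ _, ?_⟩
              rw [Sym.mem_map]
              rintro ⟨a, _, haeq⟩
              exact absurd haeq (Fin.ne_of_lt (Fin.castSucc_lt_last a))
            · exact fun t1 _ t2 _ h => Sym.map_injective (Fin.castSucc_injective k) _ h
            · intro s hs
              simp only [Finset.coe_filter, Set.mem_setOf_eq] at hs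
              obtain ⟨t, rfl⟩ := exists_map_castSucc s hs.2
              exact ⟨t, by simp, rfl⟩
            · intro t _
              rw [Sym.coe_map, show Px x (Multiset.map Fin.castSucc ↑t) = Px x' ↑t by
                simp [Px, Multiset.map_map, hx']]
          have hGH : x d • G + H = 0 := by
            rw [← hA, ← hB, Finset.sum_filter_add_sum_filter_not, hsum]
          have hHmem : H ∈ J' ^ (n + 1) • (⊤ : Submodule R M) :=
            sum_rep_mem x' ⊤ (n + 1) _ (fun _ => trivial)
          have hGmem : G ∈ J' ^ (n + 1) • (⊤ : Submodule R M) := by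
            refine hL (n + 1) G ?_
            have : x d • G = -H := eq_neg_of_add_eq_zero_left hGH
            rw [this]
            exact Submodule.neg_mem _ hHmem
          have hclaim1 : ∀ s' : Sym (Fin (k+1)) n, m (d ::ₛ s') ∈ J • (⊤ : Submodule R M) := by
            refine Qmem_of x n ihn _ ?_
            exact Submodule.smul_mono_left (Ideal.pow_right_mono hJ'J _) hGmem
          have hclaim2 : ∀ t : Sym (Fin k) (n+1),
              m (Sym.map Fin.castSucc t) ∈ J • (⊤ : Submodule R M) := by
            obtain ⟨w, hw, hGw⟩ := hasRep_of_mem x' ⊤ (n + 1) G hGmem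
            have h0 : (∑ t : Sym (Fin k) (n+1),
                Px x' ↑t • (x d • w t + m (Sym.map Fin.castSucc t))) = 0 := by
              have : (∑ t : Sym (Fin k) (n+1),
                  Px x' ↑t • (x d • w t + m (Sym.map Fin.castSucc t)))
                  = x d • G + H := by
                rw [hGw, hH, Finset.smul_sum, ← Finset.sum_add_distrib]
                refine Finset.sum_congr rfl fun t _ => ?_
                rw [smul_add]
                congr 1
                exact (smul_comm _ _ _).symm
              rw [this, hGH]
            intro t
            have h1 := hQ' (n + 1) _ h0 t
            have h2 : x d • w t ∈ J • (⊤ : Submodule R M) :=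
              Submodule.smul_mem_smul (Ideal.subset_span ⟨d, rfl⟩) trivial
            have h3 : x d • w t + m (Sym.map Fin.castSucc t) ∈ J • (⊤ : Submodule R M) :=
              Submodule.smul_mono_left hJ'J h1
            simpa using Submodule.sub_mem _ h3 h2
          by_cases hd0 : d ∈ s0
          · rw [← Sym.cons_erase hd0]
            exact hclaim1 _
          · obtain ⟨t, rfl⟩ := exists_map_castSucc s0 hd0
            exact hclaim2 t


lemma chain_mono (N : Submodule R M) (y : R) {a b : ℕ} (h : a ≤ b) :
    N.comap (LinearMap.lsmul R M (y ^ a)) ≤ N.comap (LinearMap.lsmul R M (y ^ b)) := by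
  intro z hz
  simp only [Submodule.mem_comap, LinearMap.lsmul_apply] at hz ⊢
  have : y ^ b • z = y ^ (b - a) • (y ^ a • z) := by
    rw [← mul_smul, ← pow_add, Nat.sub_add_cancel h]
  rw [this]
  exact N.smul_mem _ hz

lemma key {k : ℕ} (x : Fin k → R) (y : R) (hreg : IsRegularSeq M x) (c : ℕ)
    (hc : ∀ m : ℕ, c ≤ m →
      ((Ideal.span (Set.range x)) • (⊤ : Submodule R M)).comap (LinearMap.lsmul R M (y ^ m)) ≤
      ((Ideal.span (Set.range x)) • (⊤ : Submodule R M)).comap (LinearMap.lsmul R M (y ^ c))) :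
    ∀ n : ℕ, ∃ cn : ℕ, ∀ m : ℕ, cn ≤ m →
      ((Ideal.span (Set.range x)) ^ (n+1) • (⊤ : Submodule R M)).comap
        (LinearMap.lsmul R M (y ^ m)) ≤
      ((Ideal.span (Set.range x)) ^ (n+1) • (⊤ : Submodule R M)).comap
        (LinearMap.lsmul R M (y ^ cn)) := by
  intro n
  induction n with
  | zero =>
      refine ⟨c, fun m hm => ?_⟩
      rw [pow_one]
      exact hc m hm
  | succ n ihn =>
      obtain ⟨cn, hcn⟩ := ihn
      refine ⟨cn + c, fun m hm z hz => ?_⟩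
      simp only [Submodule.mem_comap, LinearMap.lsmul_apply] at hz ⊢
      set J := Ideal.span (Set.range x) with hJ
      have step1 : y ^ m • z ∈ J ^ (n + 1) • (⊤ : Submodule R M) :=
        Submodule.smul_mono_left (Ideal.pow_le_pow_right (by omega)) hz
      have step2 : y ^ cn • z ∈ J ^ (n + 1) • (⊤ : Submodule R M) := by
        have := hcn m (by omega) (by simpa [Submodule.mem_comap] using step1)
        simpa [Submodule.mem_comap] using this
      obtain ⟨w, hw, hwz⟩ := hasRep_of_mem x ⊤ (n + 1) _ step2
      have hin : (∑ s : Sym (Fin k) (n+1), Px x ↑s • (y ^ (m - cn) • w s)) ∈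
          J ^ (n + 1 + 1) • (⊤ : Submodule R M) := by
        have heq : (∑ s : Sym (Fin k) (n+1), Px x ↑s • (y ^ (m - cn) • w s))
            = y ^ m • z := by
          have h1 : (∑ s : Sym (Fin k) (n+1), Px x ↑s • (y ^ (m - cn) • w s))
              = y ^ (m - cn) • ∑ s : Sym (Fin k) (n+1), Px x ↑s • w s := by
            rw [Finset.smul_sum]
            exact Finset.sum_congr rfl fun s _ => smul_comm _ _ _
          rw [h1, ← hwz, ← mul_smul, ← pow_add, Nat.sub_add_cancel (by omega)]
        rw [heq]
        exact hz
      have step5 : ∀ s, y ^ (m - cn) • w s ∈ J • (⊤ : Submodule R M) :=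
        Qmem_of x (n + 1) (Q0 k x hreg (n + 1)) _ hin
      have step6 : ∀ s, y ^ c • w s ∈ J • (⊤ : Submodule R M) := by
        intro s
        have := hc (m - cn) (by omega) (by simpa [Submodule.mem_comap] using step5 s)
        simpa [Submodule.mem_comap] using this
      have step7 := sum_rep_mem x (J • ⊤) (n + 1) (fun s => y ^ c • w s) step6
      rw [← Submodule.smul_assoc, smul_eq_mul, ← pow_succ] at step7
      have heq2 : y ^ (cn + c) • z = ∑ s : Sym (Fin k) (n+1), Px x ↑s • (y ^ c • w s) := by
      -- y^{cn+c} • z = y^c • (y^cn • z)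
        have h1 : y ^ (cn + c) • z = y ^ c • (y ^ cn • z) := by
          rw [← mul_smul, ← pow_add, Nat.add_comm c cn]
        rw [h1, hwz, Finset.smul_sum]
        exact Finset.sum_congr rfl fun s _ => smul_comm _ _ _
      rw [heq2]
      exact step7

end QPBTaux

/-- If `x` is an `M`-regular sequence and `M/xM` is of bounded `y`-torsion, then
`M/x^n M` is of bounded `y`-torsion for all `n ≥ 1`.  Bounded `y`-torsion of the
quotient `M/N` is expressed via stabilization of the chain `(N :_M y^m)`. -/
theorem quotient_pow_boundedTorsion {R : Type*} [CommRing R]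
    {M : Type*} [AddCommGroup M] [Module R M] {k : ℕ} (x : Fin k → R) (y : R)
    (hreg : IsRegularSeq M x)
    (hbdd : ∃ c : ℕ, ∀ m : ℕ, c ≤ m →
      ((Ideal.span (Set.range x)) • (⊤ : Submodule R M)).comap (LinearMap.lsmul R M (y ^ m)) =
        ((Ideal.span (Set.range x)) • (⊤ : Submodule R M)).comap (LinearMap.lsmul R M (y ^ c))) :
    ∀ n : ℕ, 1 ≤ n → ∃ c : ℕ, ∀ m : ℕ, c ≤ m →
      ((Ideal.span (Set.range x)) ^ n • (⊤ : Submodule R M)).comap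
          (LinearMap.lsmul R M (y ^ m)) =
        ((Ideal.span (Set.range x)) ^ n • (⊤ : Submodule R M)).comap
          (LinearMap.lsmul R M (y ^ c)) := by
  intro n hn
  obtain ⟨c, hc⟩ := hbdd
  obtain ⟨n', rfl⟩ : ∃ n', n = n' + 1 := ⟨n - 1, by omega⟩
  obtain ⟨cn, hcn⟩ := QPBTaux.key x y hreg c (fun m hm => le_of_eq (hc m hm)) n'
  exact ⟨cn, fun m hm => le_antisymm (hcn m hm) (QPBTaux.chain_mono _ y hm)⟩
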